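/- For every dimension d ≥ 1 there exist a number of voters N, a family of voter ideal points v : Fin N → ℝ^d, and a subset I of Fin N such that I is TIOLI-allowed but I is not EDP-allowed. (For instance, take the three collinear points 0, e₁, 2e₁ and I the singleton consisting of the middle voter.) -/

import Mathlib

/-- A coalition `I` is **EDP-allowed**: there exist outcome points `p, q` in Euclidean
space such that every voter in `I` is strictly closer to `p` and every voter outside
`I` is strictly closer to `q`. -/
def EDPAllowed {d N : ℕ} (v : Fin N → EuclideanSpace ℝ (Fin d)) (I : Set (Fin N)) : Prop :=
  ∃ p q : EuclideanSpace ℝ (Fin d),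
    (∀ i ∈ I, dist (v i) p < dist (v i) q) ∧ (∀ j ∉ I, dist (v j) q < dist (v j) p)

/-- A coalition `I` is **TIOLI-allowed**: there exist a point `p` and a radius `r ≥ 0`
such that either `I` or its complement is exactly the set of voters whose ideal point
lies in the closed ball `B(p, r)`. -/
def TIOLIAllowed {d N : ℕ} (v : Fin N → EuclideanSpace ℝ (Fin d)) (I : Set (Fin N)) : Prop :=
  ∃ p : EuclideanSpace ℝ (Fin d), ∃ r : ℝ, 0 ≤ r ∧
    (I = {i | dist (v i) p ≤ r} ∨ Iᶜ = {i | dist (v i) p ≤ r})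

/-- In every dimension `d ≥ 1` there is a configuration of voter ideal points and a
coalition that is TIOLI-allowed but not EDP-allowed. -/
theorem exists_tioli_allowed_not_edp_allowed (d : ℕ) (hd : 1 ≤ d) :
    ∃ (N : ℕ) (v : Fin N → EuclideanSpace ℝ (Fin d)) (I : Set (Fin N)),
      TIOLIAllowed v I ∧ ¬ EDPAllowed v I := by
  set e : EuclideanSpace ℝ (Fin d) := EuclideanSpace.single (⟨0, hd⟩ : Fin d) (1 : ℝ) with he
  have hne : ‖e‖ = 1 := by
    rw [he, EuclideanSpace.norm_single]; norm_num
  refine ⟨3, ![0, e, (2:ℝ) • e], {1}, ?_, ?_⟩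
  · refine ⟨e, 0, le_refl 0, Or.inl ?_⟩
    ext i
    fin_cases i
    · simp only [Set.mem_setOf_eq, Matrix.cons_val_zero, dist_eq_norm, zero_sub, norm_neg, hne]
      simp
      intro h
      exact absurd hne (by rw [h]; simp)
    · simp [dist_eq_norm]
    · simp only [Set.mem_setOf_eq, dist_eq_norm]
      have : (2:ℝ) • e - e = e := by
        rw [two_smul]; abel
      simp [Matrix.cons_val_two, this, hne]
  · rintro ⟨p, q, h1, h2⟩
    have hA : dist e p < dist e q := by
      have := h1 1 rfl
      simpa using this
    have hB : dist (0 : EuclideanSpace ℝ (Fin d)) q < dist 0 p := by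
      have := h2 0 (by simp)
      simpa using this
    have hC : dist ((2:ℝ) • e) q < dist ((2:ℝ) • e) p := by
      have := h2 2 (by simp [Fin.ext_iff])
      simpa [Matrix.cons_val_two] using this
    -- square the inequalities
    have sqA : dist e p ^ 2 < dist e q ^ 2 :=
      pow_lt_pow_left₀ hA dist_nonneg two_ne_zero
    have sqB : dist (0 : EuclideanSpace ℝ (Fin d)) q ^ 2 < dist 0 p ^ 2 :=
      pow_lt_pow_left₀ hB dist_nonneg two_ne_zero
    have sqC : dist ((2:ℝ) • e) q ^ 2 < dist ((2:ℝ) • e) p ^ 2 :=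
      pow_lt_pow_left₀ hC dist_nonneg two_ne_zero
    have expand : ∀ x y : EuclideanSpace ℝ (Fin d),
        dist x y ^ 2 = ‖x‖ ^ 2 - 2 * inner ℝ x y + ‖y‖ ^ 2 := by
      intro x y
      rw [dist_eq_norm, @norm_sub_sq_real]
    rw [expand, expand] at sqA sqB sqC
    rw [real_inner_smul_left, real_inner_smul_left] at sqC
    simp only [norm_zero, inner_zero_left] at sqB
    nlinarith [sqA, sqB, sqC]
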